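/- Let G be a connected looped simple graph with at least two vertices. Then M(IAS(G)) is a connected matroid. -/

import Mathlib

/-- The three column types of the matrix `IAS(G) = (I | A | I+A)`. -/
inductive GType : Type
  | phi | chi | psi
  deriving DecidableEq

instance : Fintype GType :=
  ⟨{GType.phi, GType.chi, GType.psi}, fun x => by cases x <;> simp⟩

/-- The column of `IAS(G) = (I | A(G) | I+A(G))` indexed by a ground set element of
`W(G) = V × {φ, χ, ψ}`. -/
def iasCol {V : Type} [DecidableEq V] (A : Matrix V V (ZMod 2)) : V × GType → V → ZMod 2
  | (v, GType.phi) => fun w => if w = v then 1 else 0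
  | (v, GType.chi) => fun w => A w v
  | (v, GType.psi) => fun w => (if w = v then 1 else 0) + A w v

/-- Independence in the binary matroid `M(IAS(G))`: a set of ground elements is independent
iff the corresponding columns of `IAS(G)` are linearly independent over `GF(2)`. -/
def IasIndep {V : Type} [DecidableEq V] (A : Matrix V V (ZMod 2))
    (S : Set (V × GType)) : Prop :=
  LinearIndependent (ZMod 2) (fun p : S => iasCol A p.1)

/-- A circuit of `M(IAS(G))`: a minimal dependent set. -/
def IasCircuit {V : Type} [DecidableEq V] (A : Matrix V V (ZMod 2))
    (C : Set (V × GType)) : Prop :=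
  ¬ IasIndep A C ∧ ∀ D : Set (V × GType), D ⊂ C → IasIndep A D

/-- The rank of a subset of the ground set of `M(IAS(G))`: the `GF(2)`-rank of the
corresponding set of columns of `IAS(G)`. -/
noncomputable def iasRk {V : Type} [Fintype V] [DecidableEq V] (A : Matrix V V (ZMod 2))
    (S : Set (V × GType)) : ℕ :=
  Module.finrank (ZMod 2) (Submodule.span (ZMod 2) (iasCol A '' S))

/-- Adjacency in the looped simple graph with adjacency matrix `A` (loops do not count). -/
def GAdj {V : Type} (A : Matrix V V (ZMod 2)) (v w : V) : Prop :=
  v ≠ w ∧ A v w = 1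

set_option linter.unusedSectionVars false
namespace IasAux

variable {V : Type} [Fintype V] [DecidableEq V] (A : Matrix V V (ZMod 2))

/-- Sum of the columns indexed by a finite set. -/
def csum (C : Finset (V × GType)) : V → ZMod 2 := ∑ x ∈ C, iasCol A x

/-- Finset version of circuits: minimal nonempty zero-sum sets. -/
def CircF (C : Finset (V × GType)) : Prop :=
  C.Nonempty ∧ csum A C = 0 ∧ ∀ D ⊆ C, D.Nonempty → csum A D = 0 → D = C

lemma zmod2_ne_zero : ∀ {u : ZMod 2}, u ≠ 0 → u = 1 := by decide

lemma indep_iff (S : Set (V × GType)) :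
    IasIndep A S ↔ ∀ D : Finset (V × GType), ↑D ⊆ S → csum A D = 0 → D = ∅ := by
  have hfam : (fun p : S => iasCol A p.1) = (iasCol A ∘ (Subtype.val : S → _)) := rfl
  rw [IasIndep, hfam, linearIndependent_comp_subtype_iff, linearIndepOn_iff]
  constructor
  · intro h D hDS hD0
    set l : (V × GType) →₀ ZMod 2 := ∑ x ∈ D, Finsupp.single x 1 with hl
    have hlapp : ∀ x, l x = if x ∈ D then 1 else 0 := by
      intro x
      rw [hl]
      rw [Finset.sum_apply']
      simp only [Finsupp.single_apply]
      rw [Finset.sum_ite_eq' D x (fun _ => (1 : ZMod 2))]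
    have hsupp : l ∈ Finsupp.supported (ZMod 2) (ZMod 2) S := by
      rw [Finsupp.mem_supported (ZMod 2)]
      intro x hx
      simp only [Finset.mem_coe, Finsupp.mem_support_iff, hlapp] at hx
      by_cases hxD : x ∈ D
      · exact hDS hxD
      · rw [if_neg hxD] at hx; exact absurd rfl hx
    have htot : Finsupp.linearCombination (ZMod 2) (iasCol A) l = 0 := by
      rw [hl, map_sum]
      simp only [Finsupp.linearCombination_single, one_smul]
      exact hD0
    have := h l hsupp htot
    -- conclude D = ∅
    by_contra hne
    obtain ⟨x, hx⟩ := Finset.nonempty_iff_ne_empty.mpr hne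
    have : l x = 0 := by rw [this]; rfl
    rw [hlapp, if_pos hx] at this
    exact one_ne_zero this
  · intro h l hl hl0
    have hsub : ↑l.support ⊆ S := (Finsupp.mem_supported (ZMod 2) l).mp hl
    have hsum : csum A l.support = 0 := by
      rw [csum]
      have : ∀ x ∈ l.support, iasCol A x = l x • iasCol A x := by
        intro x hx
        rw [zmod2_ne_zero (Finsupp.mem_support_iff.mp hx), one_smul]
      rw [Finset.sum_congr rfl this]
      rw [Finsupp.linearCombination_apply, Finsupp.sum] at hl0
      exact hl0
    have := h l.support hsub hsum
    exact Finsupp.support_eq_empty.mp this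

lemma circF_circuit {C : Finset (V × GType)} (h : CircF A C) : IasCircuit A ↑C := by
  obtain ⟨hne, h0, hmin⟩ := h
  constructor
  · rw [indep_iff]
    push_neg
    exact ⟨C, subset_rfl, h0, hne⟩
  · intro D hD
    rw [indep_iff]
    intro D' hsub h0'
    by_contra hne'
    have hD'C : D' ⊆ C := by
      rw [← Finset.coe_subset]
      exact hsub.trans hD.subset
    have := hmin D' hD'C (Finset.nonempty_iff_ne_empty.mpr hne') h0'
    subst this
    exact hD.not_subset (by exact_mod_cast hsub)


lemma char2_sum {x : V → ZMod 2} : x + x = 0 := by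
  funext z
  have : ∀ u : ZMod 2, u + u = 0 := by decide
  exact this _

/-- Any zero-sum set contains, through each of its points, a circuit. -/
lemma exists_circF (D : Finset (V × GType)) (h0 : csum A D = 0) (f : V × GType) (hf : f ∈ D) :
    ∃ C ⊆ D, CircF A C ∧ f ∈ C := by
  classical
  induction D using Finset.strongInduction with
  | _ D ih =>
    -- find some circuit inside D
    have hDne : D.Nonempty := ⟨f, hf⟩
    set fam := D.powerset.filter (fun X => X ≠ ∅ ∧ csum A X = 0) with hfam
    have hDfam : D ∈ fam := by
      rw [hfam, Finset.mem_filter, Finset.mem_powerset]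
      exact ⟨subset_rfl, Finset.nonempty_iff_ne_empty.mp hDne, h0⟩
    obtain ⟨C0, hC0fam, hC0min⟩ := Finset.exists_min_image fam Finset.card ⟨D, hDfam⟩
    rw [hfam, Finset.mem_filter, Finset.mem_powerset] at hC0fam
    obtain ⟨hC0D, hC0ne, hC0sum⟩ := hC0fam
    have hC0circ : CircF A C0 := by
      refine ⟨Finset.nonempty_iff_ne_empty.mpr hC0ne, hC0sum, ?_⟩
      intro E hE hEne hE0
      have hEfam : E ∈ fam := by
        rw [hfam, Finset.mem_filter, Finset.mem_powerset]
        exact ⟨hE.trans hC0D, Finset.nonempty_iff_ne_empty.mp hEne, hE0⟩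
      exact Finset.eq_of_subset_of_card_le hE (hC0min E hEfam)
    by_cases hfC0 : f ∈ C0
    · exact ⟨C0, hC0D, hC0circ, hfC0⟩
    · -- recurse into D \ C0
      have hss : D \ C0 ⊂ D := by
        refine Finset.sdiff_ssubset hC0D hC0circ.1
      have hsum' : csum A (D \ C0) = 0 := by
        have h : csum A (D \ C0) + csum A C0 = csum A D :=
          Finset.sum_sdiff (f := iasCol A) hC0D
        rw [hC0sum, h0, add_zero] at h
        exact h
      have hfD' : f ∈ D \ C0 := Finset.mem_sdiff.mpr ⟨hf, hfC0⟩
      obtain ⟨C, hCsub, hCcirc, hfC⟩ := ih (D \ C0) hss hsum' hfD'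
      exact ⟨C, hCsub.trans (Finset.sdiff_subset), hCcirc, hfC⟩

/-- Strong circuit elimination for binary matroids. -/
lemma strong_elim {C1 C2 : Finset (V × GType)} (h1 : CircF A C1) (h2 : CircF A C2)
    {e : V × GType} (he1 : e ∈ C1) (he2 : e ∈ C2)
    {f : V × GType} (hf2 : f ∈ C2) (hf1 : f ∉ C1) :
    ∃ C3, CircF A C3 ∧ f ∈ C3 ∧ C3 ⊆ (C1 ∪ C2) ∧ e ∉ C3 := by
  classical
  set Δ := (C1 ∪ C2) \ (C1 ∩ C2) with hΔ
  have hsum : csum A Δ = 0 := by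
    have hs : csum A Δ + csum A (C1 ∩ C2) = csum A (C1 ∪ C2) :=
      Finset.sum_sdiff (f := iasCol A) Finset.inter_subset_union
    have hui : csum A (C1 ∪ C2) + csum A (C1 ∩ C2) = csum A C1 + csum A C2 :=
      Finset.sum_union_inter (f := iasCol A)
    rw [h1.2.1, h2.2.1, add_zero] at hui
    have : csum A Δ + (csum A (C1 ∩ C2) + csum A (C1 ∩ C2)) =
        csum A (C1 ∪ C2) + csum A (C1 ∩ C2) := by rw [← add_assoc, hs]
    rw [char2_sum, add_zero, hui] at this
    exact this
  have hfΔ : f ∈ Δ := by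
    rw [hΔ, Finset.mem_sdiff, Finset.mem_union, Finset.mem_inter]
    exact ⟨Or.inr hf2, fun h => hf1 h.1⟩
  obtain ⟨C3, hC3Δ, hC3circ, hfC3⟩ := exists_circF A Δ hsum f hfΔ
  refine ⟨C3, hC3circ, hfC3, fun x hx => (Finset.mem_sdiff.mp (hC3Δ hx)).1, fun hec => ?_⟩
  exact (Finset.mem_sdiff.mp (hC3Δ hec)).2 (Finset.mem_inter.mpr ⟨he1, he2⟩)

/-- If a nonempty zero-sum set is contained in a circuit, it equals the circuit. -/
lemma circ_eq_of_subset {C C' : Finset (V × GType)} (h : CircF A C) (h' : CircF A C')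
    (hsub : C' ⊆ C) : C' = C := h.2.2 C' hsub h'.1 h'.2.1

lemma conn_trans_aux (p q : V × GType) (C1 : Finset (V × GType)) (h1 : CircF A C1)
    (hp : p ∈ C1) :
    ∀ n : ℕ, ∀ C2 : Finset (V × GType), CircF A C2 → q ∈ C2 → (C1 ∩ C2).Nonempty →
      (C2 \ C1).card ≤ n → ∃ C, CircF A C ∧ p ∈ C ∧ q ∈ C := by
  classical
  intro n
  induction n with
  | zero =>
    intro C2 h2 hq hint hcard
    have : C2 \ C1 = ∅ := Finset.card_eq_zero.mp (Nat.le_zero.mp hcard)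
    have hsub : C2 ⊆ C1 := by
      intro x hx
      by_contra hx1
      exact absurd (Finset.mem_sdiff.mpr ⟨hx, hx1⟩) (by simp [this])
    have := circ_eq_of_subset A h1 h2 hsub
    exact ⟨C1, h1, hp, this ▸ hq⟩
  | succ n ih =>
    intro C2 h2 hq hint hcard
    by_cases hqC1 : q ∈ C1
    · exact ⟨C1, h1, hp, hqC1⟩
    by_cases hpC2 : p ∈ C2
    · exact ⟨C2, h2, hpC2, hq⟩
    obtain ⟨e, he⟩ := hint
    rw [Finset.mem_inter] at he
    -- eliminate e from C2, C1 keeping p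
    obtain ⟨C3, h3, hpC3, hC3sub, heC3⟩ :=
      strong_elim A h2 h1 he.2 he.1 hp hpC2
    by_cases hqC3 : q ∈ C3
    · exact ⟨C3, h3, hpC3, hqC3⟩
    -- pick g ∈ C3 \ C1
    have hC3ne : ¬ C3 ⊆ C1 := by
      intro hss
      have := circ_eq_of_subset A h1 h3 hss
      exact heC3 (this ▸ he.1)
    obtain ⟨g, hgC3, hgC1⟩ := Finset.not_subset.mp hC3ne
    have hgC2 : g ∈ C2 := by
      rcases Finset.mem_union.mp (hC3sub hgC3) with h | h
      · exact h
      · exact absurd h hgC1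
    -- eliminate g from C3, C2 keeping q
    obtain ⟨C4, h4, hqC4, hC4sub, hgC4⟩ :=
      strong_elim A h3 h2 hgC3 hgC2 hq hqC3
    by_cases hpC4 : p ∈ C4
    · exact ⟨C4, h4, hpC4, hqC4⟩
    -- C4 meets C1
    have hC4C2 : ∀ x ∈ C4, x ∉ C1 → x ∈ C2 := by
      intro x hx hx1
      rcases Finset.mem_union.mp (hC4sub hx) with h | h
      · rcases Finset.mem_union.mp (hC3sub h) with h' | h'
        · exact h'
        · exact absurd h' hx1
      · exact h
    have hint4 : (C1 ∩ C4).Nonempty := by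
      by_contra hemp
      rw [Finset.not_nonempty_iff_eq_empty] at hemp
      have hsub : C4 ⊆ C2 := by
        intro x hx
        refine hC4C2 x hx fun hx1 => ?_
        exact absurd (Finset.mem_inter.mpr ⟨hx1, hx⟩) (by simp [hemp])
      have := circ_eq_of_subset A h2 h4 hsub
      exact hgC4 (this ▸ hgC2)
    have hcard4 : (C4 \ C1).card ≤ n := by
      have hsub : C4 \ C1 ⊆ (C2 \ C1).erase g := by
        intro x hx
        rw [Finset.mem_sdiff] at hx
        rw [Finset.mem_erase, Finset.mem_sdiff]
        exact ⟨fun hxg => hgC4 (hxg ▸ hx.1), hC4C2 x hx.1 hx.2, hx.2⟩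
      have h1' := Finset.card_le_card hsub
      have h2' : ((C2 \ C1).erase g).card = (C2 \ C1).card - 1 :=
        Finset.card_erase_of_mem (Finset.mem_sdiff.mpr ⟨hgC2, hgC1⟩)
      omega
    exact ih C4 h4 hqC4 hint4 hcard4

lemma conn_trans {p r q : V × GType}
    (h1 : ∃ C, CircF A C ∧ p ∈ C ∧ r ∈ C) (h2 : ∃ C, CircF A C ∧ r ∈ C ∧ q ∈ C) :
    ∃ C, CircF A C ∧ p ∈ C ∧ q ∈ C := by
  obtain ⟨C1, hC1, hp, hr1⟩ := h1
  obtain ⟨C2, hC2, hr2, hq⟩ := h2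
  exact conn_trans_aux A p q C1 hC1 hp (C2 \ C1).card C2 hC2 hq
    ⟨r, Finset.mem_inter.mpr ⟨hr1, hr2⟩⟩ le_rfl

/-! ### Concrete circuits -/

lemma csum_apply (C : Finset (V × GType)) (z : V) :
    csum A C z = ∑ x ∈ C, iasCol A x z := by
  rw [csum]
  exact Finset.sum_apply z C _

lemma phi_sum (F : Finset V) :
    csum A (F.image (fun u => (u, GType.phi))) = fun z => if z ∈ F then 1 else 0 := by
  funext z
  rw [csum_apply, Finset.sum_image (by intro a _ b _ h; exact (Prod.mk.injEq ..).mp h |>.1)]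
  simp only [iasCol]
  rw [Finset.sum_ite_eq F z (fun _ => (1 : ZMod 2))]

lemma phi_ind_inj {F F' : Finset V}
    (h : (fun z => if z ∈ F then (1 : ZMod 2) else 0) = fun z => if z ∈ F' then 1 else 0) :
    F = F' := by
  ext z
  have := congrFun h z
  by_cases h1 : z ∈ F <;> by_cases h2 : z ∈ F' <;> simp_all

lemma psi_col (v : V) :
    iasCol A (v, GType.psi) = iasCol A (v, GType.phi) + iasCol A (v, GType.chi) := by
  funext w; simp [iasCol]

lemma phi_col_ne (v : V) : iasCol A (v, GType.phi) ≠ 0 := by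
  intro h
  have := congrFun h v
  simp [iasCol] at this

section Graph

variable (hA : A.IsSymm) (hconn : ∀ v w : V, Relation.ReflTransGen (GAdj A) v w)
  (hcard : 2 ≤ Fintype.card V)

include hconn hcard in
lemma exists_nbr (v : V) : ∃ w, v ≠ w ∧ A v w = 1 := by
  obtain ⟨w0, hw0⟩ := Fintype.exists_ne_of_one_lt_card (by omega) v
  rcases (hconn v w0).cases_head with h | ⟨c, hc, -⟩
  · exact absurd h.symm hw0
  · exact ⟨c, hc.1, hc.2⟩

include hA hconn hcard in
lemma chi_col_ne (v : V) : iasCol A (v, GType.chi) ≠ 0 := by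
  obtain ⟨w, hvw, hAvw⟩ := exists_nbr A hconn hcard v
  intro h
  have := congrFun h w
  simp only [iasCol, Pi.zero_apply] at this
  rw [← hA.apply w v, hAvw] at this
  exact one_ne_zero this

include hA hconn hcard in
lemma psi_col_ne (v : V) : iasCol A (v, GType.psi) ≠ 0 := by
  obtain ⟨w, hvw, hAvw⟩ := exists_nbr A hconn hcard v
  intro h
  have := congrFun h w
  simp only [iasCol, Pi.zero_apply, if_neg (show ¬ w = v from fun hh => hvw hh.symm)] at this
  rw [← hA.apply w v, hAvw, zero_add] at this
  exact one_ne_zero this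

end Graph

/-- The triangle at a vertex. -/
lemma triangle_circ (v : V)
    (hchi : iasCol A (v, GType.chi) ≠ 0) (hpsi : iasCol A (v, GType.psi) ≠ 0) :
    CircF A {(v, GType.phi), (v, GType.chi), (v, GType.psi)} := by
  classical
  set a := (v, GType.phi) with ha
  set b := (v, GType.chi) with hb
  set c := (v, GType.psi) with hc
  have hab : a ≠ b := by simp [ha, hb]
  have hac : a ≠ c := by simp [ha, hc]
  have hbc : b ≠ c := by simp [hb, hc]
  have hsumD : ∀ D : Finset (V × GType), D ⊆ {a, b, c} →
      csum A D = (if a ∈ D then iasCol A a else 0) + (if b ∈ D then iasCol A b else 0)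
        + (if c ∈ D then iasCol A c else 0) := by
    intro D hD
    have h1 : csum A D = ∑ x ∈ ({a,b,c} : Finset (V × GType)), if x ∈ D then iasCol A x else 0 := by
      rw [csum, ← Finset.sum_filter]
      congr 1
      ext x
      simp only [Finset.mem_filter]
      exact ⟨fun hx => ⟨hD hx, hx⟩, fun hx => hx.2⟩
    rw [h1, Finset.sum_insert (by simp [hab, hac]), Finset.sum_insert (by simp [hbc]),
      Finset.sum_singleton, add_assoc]
  have hrel : iasCol A c = iasCol A a + iasCol A b := psi_col A v
  constructor
  · exact ⟨a, by simp⟩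
  constructor
  · rw [hsumD _ subset_rfl]
    rw [if_pos (by simp), if_pos (by simp), if_pos (by simp), hrel]
    exact char2_sum
  · intro D hD hne h0
    rw [hsumD _ hD] at h0
    by_cases h1 : a ∈ D <;> by_cases h2 : b ∈ D <;> by_cases h3 : c ∈ D
    · ext x
      constructor
      · exact fun hx => hD hx
      · intro hx
        rcases Finset.mem_insert.mp hx with h | hx
        · exact h ▸ h1
        rcases Finset.mem_insert.mp hx with h | hx
        · exact h ▸ h2
        · exact (Finset.mem_singleton.mp hx) ▸ h3
    · rw [if_pos h1, if_pos h2, if_neg h3, add_zero, ← hrel] at h0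
      exact absurd h0 hpsi
    · rw [if_pos h1, if_neg h2, if_pos h3, add_zero, hrel] at h0
      have : iasCol A b = 0 := by
        have hh : iasCol A a + (iasCol A a + iasCol A b) = 
            (iasCol A a + iasCol A a) + iasCol A b := by ring
        rw [hh, char2_sum, zero_add] at h0
        exact h0
      exact absurd this hchi
    · rw [if_pos h1, if_neg h2, if_neg h3, add_zero, add_zero] at h0
      exact absurd h0 (phi_col_ne A v)
    · rw [if_neg h1, if_pos h2, if_pos h3, zero_add, hrel] at h0
      have : iasCol A a = 0 := by
        have hh : iasCol A b + (iasCol A a + iasCol A b) = 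
            (iasCol A b + iasCol A b) + iasCol A a := by ring
        rw [hh, char2_sum, zero_add] at h0
        exact h0
      exact absurd this (phi_col_ne A v)
    · rw [if_neg h1, if_pos h2, if_neg h3, zero_add, add_zero] at h0
      exact absurd h0 hchi
    · rw [if_neg h1, if_neg h2, if_pos h3, zero_add, zero_add] at h0
      exact absurd h0 hpsi
    · exfalso
      obtain ⟨x, hx⟩ := hne
      rcases Finset.mem_insert.mp (hD hx) with h | hx'
      · exact h1 (h ▸ hx)
      rcases Finset.mem_insert.mp hx' with h | hx''
      · exact h2 (h ▸ hx)
      · exact h3 ((Finset.mem_singleton.mp hx'') ▸ hx)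

/-- The star circuit at `(v,t)` for `t ≠ φ`: the element together with the `φ`-elements
of the support of its column. -/
def starC (v : V) (t : GType) : Finset (V × GType) :=
  insert (v, t)
    ((Finset.univ.filter (fun u => iasCol A (v, t) u = 1)).image (fun u => (u, GType.phi)))

lemma ind_supp (x : V → ZMod 2) :
    (fun z => if z ∈ Finset.univ.filter (fun u => x u = 1) then (1 : ZMod 2) else 0) = x := by
  funext z
  simp only [Finset.mem_filter, Finset.mem_univ, true_and]
  by_cases h : x z = 1
  · rw [if_pos h, h]
  · rw [if_neg h, Eq.comm]
    by_contra h0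
    exact h (zmod2_ne_zero h0)

lemma starC_circ (v : V) (t : GType) (ht : t ≠ GType.phi) (hnz : iasCol A (v, t) ≠ 0) :
    CircF A (starC A v t) := by
  classical
  set F := Finset.univ.filter (fun u => iasCol A (v, t) u = 1) with hF
  have hmem : (v, t) ∉ F.image (fun u => (u, GType.phi)) := by
    intro h
    obtain ⟨u, -, hu⟩ := Finset.mem_image.mp h
    exact ht ((Prod.mk.injEq ..).mp hu).2.symm
  have hsum0 : csum A (starC A v t) = 0 := by
    rw [starC, csum, Finset.sum_insert hmem, ← csum, phi_sum, hF, ind_supp]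
    exact char2_sum
  refine ⟨⟨(v, t), Finset.mem_insert_self _ _⟩, hsum0, ?_⟩
  intro D hD hne h0
  by_cases hvt : (v, t) ∈ D
  · -- D = starC
    have hD' : D.erase (v, t) ⊆ F.image (fun u => (u, GType.phi)) := by
      intro x hx
      rcases Finset.mem_insert.mp (hD (Finset.mem_erase.mp hx).2) with h | h
      · exact absurd h (Finset.mem_erase.mp hx).1
      · exact h
    obtain ⟨F', hF', hFim⟩ := Finset.subset_image_iff.mp hD'
    have hsum' : csum A D = iasCol A (v, t) + csum A (D.erase (v, t)) := by
      rw [csum, csum, ← Finset.sum_insert (Finset.notMem_erase _ _),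
        Finset.insert_erase hvt]
    rw [hsum', ← hFim, phi_sum] at h0
    have hxx : (fun z => if z ∈ F' then (1 : ZMod 2) else 0) = iasCol A (v, t) := by
      have := congrArg (iasCol A (v, t) + ·) h0
      simp only [add_zero] at this
      rw [← add_assoc, char2_sum, zero_add] at this
      exact this
    rw [← ind_supp (iasCol A (v,t)), ← hF] at hxx
    have hFF : F' = F := phi_ind_inj hxx
    subst hFF
    rw [starC, ← hF, hFim]
    exact (Finset.insert_erase hvt).symm
  · -- D is a nonempty set of φ-columns with zero sum: impossible
    exfalso
    have hD' : D ⊆ F.image (fun u => (u, GType.phi)) := by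
      intro x hx
      rcases Finset.mem_insert.mp (hD hx) with h | h
      · exact absurd (h ▸ hx) hvt
      · exact h
    obtain ⟨F', hF', hFim⟩ := Finset.subset_image_iff.mp hD'
    rw [← hFim, phi_sum] at h0
    obtain ⟨x, hx⟩ := hne
    rw [← hFim] at hx
    obtain ⟨u, hu, -⟩ := Finset.mem_image.mp hx
    have := congrFun h0 u
    rw [if_pos hu] at this
    exact one_ne_zero this

section Main

variable (hA : A.IsSymm) (hconn : ∀ v w : V, Relation.ReflTransGen (GAdj A) v w)
  (hcard : 2 ≤ Fintype.card V)

/-- Two ground-set elements lie on a common finite circuit. -/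
def ConnR (p q : V × GType) : Prop := ∃ C, CircF A C ∧ p ∈ C ∧ q ∈ C

include hA hconn hcard

lemma conn_triangle (v : V) (s t : GType) : ConnR A (v, s) (v, t) := by
  refine ⟨{(v, GType.phi), (v, GType.chi), (v, GType.psi)},
    triangle_circ A v (chi_col_ne A hA hconn hcard v) (psi_col_ne A hA hconn hcard v), ?_, ?_⟩ <;>
  · cases s <;> cases t <;> simp

lemma conn_edge {v w : V} (h : GAdj A v w) : ConnR A (v, GType.phi) (w, GType.phi) := by
  have hwv : iasCol A (v, GType.chi) w = 1 := by
    simp only [iasCol]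
    rw [← hA.apply w v]
    exact h.2
  have hstar : ConnR A (v, GType.chi) (w, GType.phi) := by
    refine ⟨starC A v GType.chi,
      starC_circ A v GType.chi (by simp) (chi_col_ne A hA hconn hcard v), ?_, ?_⟩
    · exact Finset.mem_insert_self _ _
    · rw [starC]
      refine Finset.mem_insert_of_mem (Finset.mem_image.mpr ⟨w, ?_, rfl⟩)
      simp [hwv]
  exact conn_trans A (conn_triangle A hA hconn hcard v GType.phi GType.chi) hstar

lemma conn_phi (v w : V) : ConnR A (v, GType.phi) (w, GType.phi) := by
  induction hconn v w with
  | refl => exact conn_triangle A hA hconn hcard v GType.phi GType.phi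
  | tail _ hbc ih =>
    exact conn_trans A ih (conn_edge A hA hconn hcard hbc)

lemma conn_all (p q : V × GType) : ConnR A p q := by
  obtain ⟨v, s⟩ := p
  obtain ⟨w, t⟩ := q
  refine conn_trans A (conn_triangle A hA hconn hcard v s GType.phi)
    (conn_trans A (conn_phi A hA hconn hcard v w) (conn_triangle A hA hconn hcard w GType.phi t))

end Main

end IasAux

/-- if `G` is connected with at least two vertices, then `M(IAS(G))` is a
connected matroid: every two (distinct) elements of the ground set lie in a common
circuit. -/
theorem isotropic_matroid_connected {V : Type} [Fintype V] [DecidableEq V]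
    (A : Matrix V V (ZMod 2)) (hA : A.IsSymm)
    (hconn : ∀ v w : V, Relation.ReflTransGen (GAdj A) v w)
    (hcard : 2 ≤ Fintype.card V) :
    ∀ p q : V × GType, p ≠ q →
      ∃ C : Set (V × GType), IasCircuit A C ∧ p ∈ C ∧ q ∈ C := by
  intro p q _
  obtain ⟨C, hC, hp, hq⟩ := IasAux.conn_all A hA hconn hcard p q
  exact ⟨↑C, IasAux.circF_circuit A hC, hp, hq⟩
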